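/- The expected transition counts v_{s';a,s} = Σ_{x∈Σⁿ} (u_x / p_{X|Θ}(x|θ)) · Σ_{i=1}^n I(x_i = a) · Σ_{σ: σ_i=s, σ_{i+1}=s'} p_{X,S|Θ}(x,σ|θ) can be computed via forward-backward: v_{s';a,s} = Σ_x (u_x / p_{X|Θ}(x|θ)) · Σ_{i: x_i = a} f_{x,s}(i-1)·θ_{s';a,s}·b_{x,s'}(i). -/
import Mathlib


open Finset



section Aux

variable {A S : Type*} [Fintype A] [Fintype S] [DecidableEq A] [DecidableEq S]
variable {n : ℕ}

/-- Forward partial product: over positions `j < i`. -/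
def myQp (θ : A → S → S → ℝ) (x : Fin n → A) (i : ℕ) (σ : Fin (n + 1) → S) : ℝ :=
  ∏ j ∈ univ.filter (fun j : Fin n => (j : ℕ) < i), θ (x j) (σ j.castSucc) (σ j.succ)

/-- Backward partial product: over positions `j ≥ i`. -/
def myRp (θ : A → S → S → ℝ) (x : Fin n → A) (i : ℕ) (σ : Fin (n + 1) → S) : ℝ :=
  ∏ j ∈ univ.filter (fun j : Fin n => i ≤ (j : ℕ)), θ (x j) (σ j.castSucc) (σ j.succ)

/-- repin: if G depends only on coordinates ≥ i+1, we may repin the prefix. -/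
lemma myRepin (i : ℕ) (h : i + 1 < n + 1) (t s' : S) (G : (Fin (n + 1) → S) → ℝ)
    (hG : ∀ σ τ : Fin (n + 1) → S, (∀ j : Fin (n + 1), i + 1 ≤ (j : ℕ) → σ j = τ j) → G σ = G τ) :
    ∑ σ ∈ univ.filter (fun σ : Fin (n + 1) → S =>
        (∀ j : Fin (n + 1), (j : ℕ) ≤ i → σ j = t) ∧ σ ⟨i + 1, h⟩ = s'), G σ
      = ∑ σ ∈ univ.filter (fun σ : Fin (n + 1) → S =>
        ∀ j : Fin (n + 1), (j : ℕ) ≤ i + 1 → σ j = s'), G σ := by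
  refine Finset.sum_nbij' (fun σ => fun j => if (j : ℕ) ≤ i then s' else σ j)
    (fun σ => fun j => if (j : ℕ) ≤ i then t else σ j) ?_ ?_ ?_ ?_ ?_
  · intro σ hσ
    simp only [mem_filter, mem_univ, true_and] at hσ ⊢
    intro j hj
    by_cases hji : (j : ℕ) ≤ i
    · simp [hji]
    · have hje : j = ⟨i + 1, h⟩ := by apply Fin.ext; simp only [Fin.val_mk]; omega
      subst hje
      show (if ((⟨i + 1, h⟩ : Fin (n+1)) : ℕ) ≤ i then s' else σ ⟨i + 1, h⟩) = s'
      rw [if_neg (by simp)]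
      exact hσ.2
  · intro σ hσ
    simp only [mem_filter, mem_univ, true_and] at hσ ⊢
    constructor
    · intro j hj; simp [hj]
    · show (if ((⟨i + 1, h⟩ : Fin (n+1)) : ℕ) ≤ i then t else σ ⟨i + 1, h⟩) = s'
      rw [if_neg (by simp)]
      exact hσ ⟨i + 1, h⟩ (by simp)
  · intro σ hσ
    simp only [mem_filter, mem_univ, true_and] at hσ
    funext j
    by_cases hji : (j : ℕ) ≤ i
    · simp [hji, hσ.1 j hji]
    · simp [hji]
  · intro σ hσ
    simp only [mem_filter, mem_univ, true_and] at hσ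
    funext j
    by_cases hji : (j : ℕ) ≤ i
    · simp [hji, hσ j (by omega)]
    · simp [hji]
  · intro σ hσ
    refine hG _ _ ?_
    intro j hj
    exact (if_neg (by omega)).symm

/-- Fiber decomposition of a filtered sum over a coordinate. -/
lemma myFiber (p : (Fin (n + 1) → S) → Prop) [DecidablePred p] (k : Fin (n + 1))
    (f : (Fin (n + 1) → S) → ℝ) :
    ∑ σ ∈ univ.filter p, f σ
      = ∑ t : S, ∑ σ ∈ univ.filter (fun σ => p σ ∧ σ k = t), f σ := by
  rw [← Finset.sum_fiberwise (univ.filter p) (fun σ => σ k) f]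
  refine Finset.sum_congr rfl fun t _ => ?_
  rw [Finset.filter_filter]

lemma myFilterLt (i : ℕ) (hi : i < n) :
    univ.filter (fun j : Fin n => (j : ℕ) < i + 1)
      = insert ⟨i, hi⟩ (univ.filter (fun j : Fin n => (j : ℕ) < i)) := by
  ext j
  simp only [mem_filter, mem_univ, true_and, mem_insert, Fin.ext_iff, Fin.val_mk]
  omega

lemma myFilterGe (i : ℕ) (hi : i < n) :
    univ.filter (fun j : Fin n => i ≤ (j : ℕ))
      = insert ⟨i, hi⟩ (univ.filter (fun j : Fin n => i + 1 ≤ (j : ℕ))) := by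
  ext j
  simp only [mem_filter, mem_univ, true_and, mem_insert, Fin.ext_iff, Fin.val_mk]
  omega

lemma myQpSucc (θ : A → S → S → ℝ) (x : Fin n → A) (i : ℕ) (hi : i < n)
    (σ : Fin (n + 1) → S) :
    myQp θ x (i + 1) σ
      = myQp θ x i σ * θ (x ⟨i, hi⟩) (σ ⟨i, by omega⟩) (σ ⟨i + 1, by omega⟩) := by
  unfold myQp
  rw [myFilterLt i hi, Finset.prod_insert (by simp)]
  have h1 : (⟨i, hi⟩ : Fin n).castSucc = ⟨i, by omega⟩ := rfl
  have h2 : (⟨i, hi⟩ : Fin n).succ = ⟨i + 1, by omega⟩ := rfl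
  rw [h1, h2]; ring

lemma myRpSucc (θ : A → S → S → ℝ) (x : Fin n → A) (i : ℕ) (hi : i < n)
    (σ : Fin (n + 1) → S) :
    myRp θ x i σ
      = θ (x ⟨i, hi⟩) (σ ⟨i, by omega⟩) (σ ⟨i + 1, by omega⟩) * myRp θ x (i + 1) σ := by
  unfold myRp
  rw [myFilterGe i hi, Finset.prod_insert (by simp)]
  have h1 : (⟨i, hi⟩ : Fin n).castSucc = (⟨i, by omega⟩ : Fin (n+1)) := rfl
  have h2 : (⟨i, hi⟩ : Fin n).succ = (⟨i + 1, by omega⟩ : Fin (n+1)) := rfl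
  rw [h1, h2]

lemma myRpDep (θ : A → S → S → ℝ) (x : Fin n → A) (i : ℕ) (σ τ : Fin (n + 1) → S)
    (h : ∀ j : Fin (n + 1), i ≤ (j : ℕ) → σ j = τ j) :
    myRp θ x i σ = myRp θ x i τ := by
  unfold myRp
  refine Finset.prod_congr rfl fun j hj => ?_
  simp only [mem_filter, mem_univ, true_and] at hj
  rw [h j.castSucc (by simp [hj]), h j.succ (by simp; omega)]

end Aux

set_option maxHeartbeats 1000000 in
lemma myFwd {A S : Type*} [Fintype A] [Fintype S] [DecidableEq A] [DecidableEq S] {n : ℕ}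
    (θ : A → S → S → ℝ) (x : Fin n → A) (c : ℝ) (hc : c ≠ 0)
    (fa : ℕ → S → ℝ) (hf0 : ∀ r : S, fa 0 r = 1 / c)
    (hfi : ∀ (i : ℕ) (hi : i < n) (r : S),
      fa (i + 1) r = ∑ s : S, fa i s * θ (x ⟨i, hi⟩) s r) :
    ∀ (i : ℕ) (hi : i ≤ n) (s : S) (G : (Fin (n + 1) → S) → ℝ),
      (∀ σ τ : Fin (n + 1) → S, (∀ j : Fin (n + 1), i ≤ (j : ℕ) → σ j = τ j) → G σ = G τ) →
      ∑ σ ∈ univ.filter (fun σ : Fin (n + 1) → S => σ ⟨i, by omega⟩ = s),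
          myQp θ x i σ * G σ
        = c * fa i s * ∑ σ ∈ univ.filter (fun σ : Fin (n + 1) → S =>
            ∀ j : Fin (n + 1), (j : ℕ) ≤ i → σ j = s), G σ := by
  intro i
  induction i with
  | zero =>
    intro hi s G hG
    have hQ : ∀ σ : Fin (n + 1) → S, myQp θ x 0 σ = 1 := by
      intro σ; unfold myQp
      rw [Finset.filter_false_of_mem (fun j _ => by omega), Finset.prod_empty]
    have hset : (univ.filter (fun σ : Fin (n + 1) → S =>
          ∀ j : Fin (n + 1), (j : ℕ) ≤ 0 → σ j = s))
        = univ.filter (fun σ : Fin (n + 1) → S => σ ⟨0, by omega⟩ = s) := by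
      ext σ
      simp only [mem_filter, mem_univ, true_and]
      constructor
      · intro h; exact h ⟨0, by omega⟩ (by simp)
      · intro h j hj
        have : j = ⟨0, by omega⟩ := by apply Fin.ext; simp only [Fin.val_mk]; omega
        rw [this]; exact h
    rw [hset, hf0]
    simp only [hQ, one_mul]
    rw [mul_one_div, div_self hc, one_mul]
  | succ i ih =>
    intro hi s' G hG
    have hi' : i < n := by omega
    have hin : i ≤ n := by omega
    -- rewrite Qp (i+1)
    have step1 : ∑ σ ∈ univ.filter (fun σ : Fin (n + 1) → S => σ ⟨i + 1, by omega⟩ = s'),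
          myQp θ x (i + 1) σ * G σ
        = ∑ t : S, ∑ σ ∈ univ.filter (fun σ : Fin (n + 1) → S =>
            σ ⟨i + 1, by omega⟩ = s' ∧ σ ⟨i, by omega⟩ = t),
            myQp θ x (i + 1) σ * G σ :=
      myFiber _ _ _
    rw [step1]
    -- per-fiber computation
    have step2 : ∀ t : S,
        ∑ σ ∈ univ.filter (fun σ : Fin (n + 1) → S =>
            σ ⟨i + 1, by omega⟩ = s' ∧ σ ⟨i, by omega⟩ = t),
            myQp θ x (i + 1) σ * G σ
        = c * fa i t * θ (x ⟨i, hi'⟩) t s' *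
            ∑ σ ∈ univ.filter (fun σ : Fin (n + 1) → S =>
              ∀ j : Fin (n + 1), (j : ℕ) ≤ i + 1 → σ j = s'), G σ := by
      intro t
      set G' : (Fin (n + 1) → S) → ℝ :=
        fun σ => if σ ⟨i + 1, by omega⟩ = s' then θ (x ⟨i, hi'⟩) t s' * G σ else 0 with hG'def
      have hG' : ∀ σ τ : Fin (n + 1) → S,
          (∀ j : Fin (n + 1), i ≤ (j : ℕ) → σ j = τ j) → G' σ = G' τ := by
        intro σ τ h
        have h1 : σ ⟨i + 1, by omega⟩ = τ ⟨i + 1, by omega⟩ := h _ (by simp)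
        have h2 : G σ = G τ := hG σ τ (fun j hj => h j (by omega))
        simp only [hG'def, h1, h2]
      have lhs_eq : ∑ σ ∈ univ.filter (fun σ : Fin (n + 1) → S =>
            σ ⟨i + 1, by omega⟩ = s' ∧ σ ⟨i, by omega⟩ = t),
            myQp θ x (i + 1) σ * G σ
          = ∑ σ ∈ univ.filter (fun σ : Fin (n + 1) → S => σ ⟨i, by omega⟩ = t),
            myQp θ x i σ * G' σ := by
        rw [Finset.sum_filter (fun σ : Fin (n + 1) → S => σ ⟨i + 1, by omega⟩ = s' ∧ σ ⟨i, by omega⟩ = t)]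
        rw [Finset.sum_filter (fun σ : Fin (n + 1) → S => σ ⟨i, by omega⟩ = t)]
        refine Finset.sum_congr rfl fun σ _ => ?_
        by_cases h2 : σ ⟨i, by omega⟩ = t
        · by_cases h1 : σ ⟨i + 1, by omega⟩ = s'
          · rw [if_pos ⟨h1, h2⟩, if_pos h2]
            simp only [hG'def, if_pos h1]
            rw [myQpSucc θ x i hi', h2, h1]; ring
          · rw [if_neg (by tauto), if_pos h2]
            simp only [hG'def, if_neg h1, mul_zero]
        · rw [if_neg (by tauto), if_neg h2]
      rw [lhs_eq, ih hin t G' hG']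
      have tail : ∑ σ ∈ univ.filter (fun σ : Fin (n + 1) → S =>
            ∀ j : Fin (n + 1), (j : ℕ) ≤ i → σ j = t), G' σ
          = θ (x ⟨i, hi'⟩) t s' * ∑ σ ∈ univ.filter (fun σ : Fin (n + 1) → S =>
            ∀ j : Fin (n + 1), (j : ℕ) ≤ i + 1 → σ j = s'), G σ := by
        have h1 : ∑ σ ∈ univ.filter (fun σ : Fin (n + 1) → S =>
              ∀ j : Fin (n + 1), (j : ℕ) ≤ i → σ j = t), G' σ
            = ∑ σ ∈ univ.filter (fun σ : Fin (n + 1) → S =>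
              (∀ j : Fin (n + 1), (j : ℕ) ≤ i → σ j = t) ∧ σ ⟨i + 1, by omega⟩ = s'),
              θ (x ⟨i, hi'⟩) t s' * G σ := by
          rw [Finset.sum_filter, Finset.sum_filter]
          refine Finset.sum_congr rfl fun σ _ => ?_
          by_cases hp : ∀ j : Fin (n + 1), (j : ℕ) ≤ i → σ j = t
          · simp only [hG'def, if_pos hp]
            by_cases h1 : σ ⟨i + 1, by omega⟩ = s'
            · rw [if_pos h1, if_pos ⟨hp, h1⟩]
            · rw [if_neg h1, if_neg (by tauto)]
          · rw [if_neg hp, if_neg (fun hcon => hp hcon.1)]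
        rw [h1, ← Finset.mul_sum]
        congr 1
        exact myRepin i (by omega) t s' G hG
      rw [tail]; ring
    rw [Finset.sum_congr rfl fun t _ => step2 t]
    simp only [hfi i hi' s', Finset.sum_mul, Finset.mul_sum]
    rw [Finset.sum_comm]
    exact Finset.sum_congr rfl fun σ _ => Finset.sum_congr rfl fun t _ => by ring

lemma myBwd {A S : Type*} [Fintype A] [Fintype S] [DecidableEq A] [DecidableEq S] {n : ℕ}
    (θ : A → S → S → ℝ) (x : Fin n → A)
    (bb : ℕ → S → ℝ) (hbn : ∀ r : S, bb n r = 1)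
    (hbi : ∀ (i : ℕ) (hi : i < n) (r : S),
      bb i r = ∑ s : S, θ (x ⟨i, hi⟩) r s * bb (i + 1) s) :
    ∀ (k i : ℕ), i + k = n → ∀ s : S,
      ∑ σ ∈ univ.filter (fun σ : Fin (n + 1) → S =>
          ∀ j : Fin (n + 1), (j : ℕ) ≤ i → σ j = s),
        myRp θ x i σ = bb i s := by
  intro k
  induction k with
  | zero =>
    intro i hik s
    have hin : i = n := by omega
    subst hin
    have hset : univ.filter (fun σ : Fin (i + 1) → S =>
          ∀ j : Fin (i + 1), (j : ℕ) ≤ i → σ j = s) = {fun _ => s} := by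
      ext σ
      simp only [mem_filter, mem_univ, true_and, Finset.mem_singleton]
      constructor
      · intro h; funext j; exact h j (by omega)
      · intro h j hj; rw [h]
    rw [hset, Finset.sum_singleton, hbn]
    unfold myRp
    rw [Finset.filter_false_of_mem (fun j _ => by omega), Finset.prod_empty]
  | succ k ih =>
    intro i hik s
    have hi' : i < n := by omega
    rw [myFiber (fun σ : Fin (n + 1) → S => ∀ j : Fin (n + 1), (j : ℕ) ≤ i → σ j = s)
      (⟨i + 1, by omega⟩ : Fin (n + 1)) (myRp θ x i)]
    have step : ∀ s' : S,
        ∑ σ ∈ univ.filter (fun σ : Fin (n + 1) → S =>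
            (∀ j : Fin (n + 1), (j : ℕ) ≤ i → σ j = s) ∧ σ ⟨i + 1, by omega⟩ = s'),
          myRp θ x i σ
        = θ (x ⟨i, hi'⟩) s s' * bb (i + 1) s' := by
      intro s'
      have h1 : ∀ σ ∈ univ.filter (fun σ : Fin (n + 1) → S =>
            (∀ j : Fin (n + 1), (j : ℕ) ≤ i → σ j = s) ∧ σ ⟨i + 1, by omega⟩ = s'),
          myRp θ x i σ = θ (x ⟨i, hi'⟩) s s' * myRp θ x (i + 1) σ := by
        intro σ hσ
        simp only [mem_filter, mem_univ, true_and] at hσ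
        rw [myRpSucc θ x i hi', hσ.1 ⟨i, by omega⟩ (by simp), hσ.2]
      rw [Finset.sum_congr rfl h1, ← Finset.mul_sum,
        myRepin i (by omega) s s' _ (fun σ τ h => myRpDep θ x (i + 1) σ τ h),
        ih (i + 1) (by omega) s']
    rw [Finset.sum_congr rfl fun s' _ => step s', ← hbi i hi' s]

set_option maxHeartbeats 2000000 in
lemma myKey {A S : Type*} [Fintype A] [Fintype S] [DecidableEq A] [DecidableEq S] {n : ℕ}
    (θ : A → S → S → ℝ) (x : Fin n → A) (c : ℝ) (hc : c ≠ 0)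
    (fa : ℕ → S → ℝ) (hf0 : ∀ r : S, fa 0 r = 1 / c)
    (hfi : ∀ (i : ℕ) (hi : i < n) (r : S),
      fa (i + 1) r = ∑ s : S, fa i s * θ (x ⟨i, hi⟩) s r)
    (bb : ℕ → S → ℝ) (hbn : ∀ r : S, bb n r = 1)
    (hbi : ∀ (i : ℕ) (hi : i < n) (r : S),
      bb i r = ∑ s : S, θ (x ⟨i, hi⟩) r s * bb (i + 1) s)
    (i : Fin n) (s s' : S) :
    ∑ σ ∈ univ.filter (fun σ : Fin (n + 1) → S => σ i.castSucc = s ∧ σ i.succ = s'),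
        ∏ j : Fin n, θ (x j) (σ j.castSucc) (σ j.succ)
      = c * (fa (i : ℕ) s * θ (x i) s s' * bb ((i : ℕ) + 1) s') := by
  have hiv : (i : ℕ) < n := i.isLt
  have hsplit : ∀ σ : Fin (n + 1) → S,
      ∏ j : Fin n, θ (x j) (σ j.castSucc) (σ j.succ) = myQp θ x (i : ℕ) σ * myRp θ x (i : ℕ) σ := by
    intro σ
    unfold myQp myRp
    rw [← Finset.prod_filter_mul_prod_filter_not univ (fun j : Fin n => (j : ℕ) < (i : ℕ))]
    congr 1
    apply Finset.prod_congr _ (fun _ _ => rfl)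
    ext j
    simp only [mem_filter, mem_univ, true_and]
    omega
  set G : (Fin (n + 1) → S) → ℝ :=
    fun σ => if σ ⟨(i : ℕ) + 1, by omega⟩ = s' then myRp θ x (i : ℕ) σ else 0 with hGdef
  have hG : ∀ σ τ : Fin (n + 1) → S,
      (∀ j : Fin (n + 1), (i : ℕ) ≤ (j : ℕ) → σ j = τ j) → G σ = G τ := by
    intro σ τ h
    have h1 : σ ⟨(i : ℕ) + 1, by omega⟩ = τ ⟨(i : ℕ) + 1, by omega⟩ := h _ (by simp)
    have h2 : myRp θ x (i : ℕ) σ = myRp θ x (i : ℕ) τ := myRpDep θ x _ σ τ h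
    simp only [hGdef, h1, h2]
  have hcs : i.castSucc = (⟨(i : ℕ), by omega⟩ : Fin (n + 1)) := rfl
  have hsc : i.succ = (⟨(i : ℕ) + 1, by omega⟩ : Fin (n + 1)) := rfl
  have lhs_eq : ∑ σ ∈ univ.filter (fun σ : Fin (n + 1) → S =>
        σ i.castSucc = s ∧ σ i.succ = s'),
        ∏ j : Fin n, θ (x j) (σ j.castSucc) (σ j.succ)
      = ∑ σ ∈ univ.filter (fun σ : Fin (n + 1) → S => σ ⟨(i : ℕ), by omega⟩ = s),
        myQp θ x (i : ℕ) σ * G σ := by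
    rw [Finset.sum_filter, Finset.sum_filter]
    refine Finset.sum_congr rfl fun σ _ => ?_
    rw [hsplit σ]
    by_cases h2 : σ ⟨(i : ℕ), by omega⟩ = s
    · by_cases h1 : σ ⟨(i : ℕ) + 1, by omega⟩ = s'
      · rw [if_pos ⟨hcs ▸ h2, hsc ▸ h1⟩, if_pos h2]
        simp only [hGdef, if_pos h1]
      · rw [if_neg (fun hcon => h1 (hsc ▸ hcon.2)), if_pos h2]
        simp only [hGdef, if_neg h1, mul_zero]
    · rw [if_neg (fun hcon => h2 (hcs ▸ hcon.1)), if_neg h2]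
  rw [lhs_eq, myFwd θ x c hc fa hf0 hfi (i : ℕ) (by omega) s G hG]
  have tail : ∑ σ ∈ univ.filter (fun σ : Fin (n + 1) → S =>
        ∀ j : Fin (n + 1), (j : ℕ) ≤ (i : ℕ) → σ j = s), G σ
      = θ (x i) s s' * bb ((i : ℕ) + 1) s' := by
    have h1 : ∑ σ ∈ univ.filter (fun σ : Fin (n + 1) → S =>
          ∀ j : Fin (n + 1), (j : ℕ) ≤ (i : ℕ) → σ j = s), G σ
        = ∑ σ ∈ univ.filter (fun σ : Fin (n + 1) → S =>
          (∀ j : Fin (n + 1), (j : ℕ) ≤ (i : ℕ) → σ j = s) ∧ σ ⟨(i : ℕ) + 1, by omega⟩ = s'),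
          θ (x i) s s' * myRp θ x ((i : ℕ) + 1) σ := by
      rw [Finset.sum_filter, Finset.sum_filter]
      refine Finset.sum_congr rfl fun σ _ => ?_
      by_cases hp : ∀ j : Fin (n + 1), (j : ℕ) ≤ (i : ℕ) → σ j = s
      · rw [if_pos hp]
        by_cases h1 : σ ⟨(i : ℕ) + 1, by omega⟩ = s'
        · rw [if_pos ⟨hp, h1⟩]
          simp only [hGdef, if_pos h1]
          rw [myRpSucc θ x (i : ℕ) hiv, hp ⟨(i : ℕ), by omega⟩ (by simp), h1]
        · rw [if_neg (fun hcon => h1 hcon.2)]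
          simp only [hGdef, if_neg h1]
      · rw [if_neg hp, if_neg (fun hcon => hp hcon.1)]
    rw [h1, ← Finset.mul_sum,
      myRepin (i : ℕ) (by omega) s s' _ (fun σ τ h => myRpDep θ x ((i : ℕ) + 1) σ τ h),
      myBwd θ x bb hbn hbi (n - ((i : ℕ) + 1)) ((i : ℕ) + 1) (by omega) s']
  rw [tail]; ring

/-- the expected transition counts
`v_{s';a,s} = Σ_x (u_x / p_{X|Θ}(x|θ)) · Σ_i I(x_i = a) · Σ_{σ : σ_i=s, σ_{i+1}=s'} p_{X,S|Θ}(x,σ|θ)`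
can be computed via forward-backward probabilities:
`v_{s';a,s} = Σ_x (u_x / p_{X|Θ}(x|θ)) · Σ_{i : x_i = a} f_{x,s}(i-1)·θ_{s';a,s}·b_{x,s'}(i)`.
Positions are zero-indexed here, so the paper's `f_{x,s}(i-1)` is `fa x ↑i s`
and `b_{x,s'}(i)` is `bb x (↑i+1) s'`.  `θ a s s'` denotes `θ_{s';a,s}`. -/
theorem stmt_17 {A S : Type*} [Fintype A] [Fintype S]
    [DecidableEq A] [DecidableEq S]
    {n : ℕ}
    (θ : A → S → S → ℝ)
    (u : (Fin n → A) → ℝ) (hu : ∀ x, 0 ≤ u x)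
    (pXS : (Fin n → A) → (Fin (n + 1) → S) → ℝ)
    (hpXS : ∀ x σ, pXS x σ =
      (1 / ((Fintype.card S : ℝ) * (Fintype.card A : ℝ) ^ n)) *
        ∏ j : Fin n, θ (x j) (σ j.castSucc) (σ j.succ))
    (pX : (Fin n → A) → ℝ)
    (hpX : ∀ x, pX x = ∑ σ : Fin (n + 1) → S, pXS x σ)
    (hpos : ∀ x, 0 < u x → 0 < pX x)
    (fa : (Fin n → A) → ℕ → S → ℝ)
    (hf0 : ∀ (x : Fin n → A) (r : S),
      fa x 0 r = 1 / ((Fintype.card S : ℝ) * (Fintype.card A : ℝ) ^ n))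
    (hfi : ∀ (x : Fin n → A) (i : ℕ) (hi : i < n) (r : S),
      fa x (i + 1) r = ∑ s : S, fa x i s * θ (x ⟨i, hi⟩) s r)
    (bb : (Fin n → A) → ℕ → S → ℝ)
    (hbn : ∀ (x : Fin n → A) (r : S), bb x n r = 1)
    (hbi : ∀ (x : Fin n → A) (i : ℕ) (hi : i < n) (r : S),
      bb x i r = ∑ s : S, θ (x ⟨i, hi⟩) r s * bb x (i + 1) s) :
    ∀ (a : A) (s s' : S),
      ∑ x : Fin n → A, (u x / pX x) *
          ∑ i : Fin n, (if x i = a then (1 : ℝ) else 0) *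
            ∑ σ ∈ Finset.univ.filter
                (fun σ : Fin (n + 1) → S => σ i.castSucc = s ∧ σ i.succ = s'),
              pXS x σ
        = ∑ x : Fin n → A, (u x / pX x) *
            ∑ i : Fin n,
              if x i = a then fa x i s * θ a s s' * bb x (i + 1) s' else 0 := by
  intro a s s'
  refine Finset.sum_congr rfl fun x _ => ?_
  congr 1
  refine Finset.sum_congr rfl fun i _ => ?_
  by_cases h : x i = a
  · rw [if_pos h, if_pos h, one_mul]
    have hc : ((Fintype.card S : ℝ) * (Fintype.card A : ℝ) ^ n) ≠ 0 := by
      have h1 : (0 : ℝ) < Fintype.card S := by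
        have : Nonempty S := ⟨s⟩
        exact_mod_cast Fintype.card_pos
      have h2 : (0 : ℝ) < Fintype.card A := by
        have : Nonempty A := ⟨x i⟩
        exact_mod_cast Fintype.card_pos
      positivity
    have key := myKey θ x _ hc (fa x) (hf0 x) (hfi x) (bb x) (hbn x) (hbi x) i s s'
    rw [Finset.sum_congr rfl fun σ _ => hpXS x σ, ← Finset.mul_sum, key, h]
    rw [one_div, inv_mul_cancel_left₀ hc]
  · rw [if_neg h, if_neg h, zero_mul]
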